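/- For any odd prime p, the Laurent series Θ_p(t) ∈ F_p((t^{-1})) is a quadratic irrational: Θ_p(t) ∉ F_p(t), and (t·Θ_p(t))^2 · (1 + t^{-2}) = 1, so that Θ_p(t) is a root of the quadratic polynomial (t^2 + 1)·X^2 − 1 over F_p[t]. -/

import Mathlib

open scoped Classical
open Filter Polynomial

noncomputable section

namespace EscapeOfMass

variable {K : Type*} [Field K]

/-- The element `t` of `K((t⁻¹))`, modelled as the Laurent series field `K⸨X⸩`
in the variable `X = t⁻¹`; thus `t = X⁻¹ = single (-1) 1`. -/
def tLS (K : Type*) [Field K] : LaurentSeries K := HahnSeries.single (-1 : ℤ) 1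

/-- The polynomial part of a Laurent series in `K((t⁻¹))` (the terms with
non-negative powers of `t`, i.e. non-positive powers of `X`). -/
def polyPart (f : LaurentSeries K) : LaurentSeries K :=
  { coeff := fun n => if n ≤ 0 then f.coeff n else 0
    isPWO_support' := by
      refine f.isPWO_support'.mono fun n hn => ?_
      simp only [Function.mem_support, ne_eq] at hn ⊢
      intro h
      exact hn (by simp [h]) }

/-- The fractional part `⟨f⟩` of a Laurent series in `K((t⁻¹))`. -/
def fracPart (f : LaurentSeries K) : LaurentSeries K := f - polyPart f

/-- The complete quotients of the continued fraction expansion of `f`. -/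
def cfQuot (f : LaurentSeries K) : ℕ → LaurentSeries K
  | 0 => f
  | i + 1 => (cfQuot f i - polyPart (cfQuot f i))⁻¹

/-- The partial quotients `A_i` of the continued fraction expansion of `f`. -/
def cfPQ (f : LaurentSeries K) (i : ℕ) : LaurentSeries K := polyPart (cfQuot f i)

/-- The degree (as an integer) of a Laurent series viewed in `K((t⁻¹))`:
for a nonzero polynomial in `t` this is the usual degree. -/
def degZ (f : LaurentSeries K) : ℤ := -f.order

/-- `f` is a rational Laurent series, i.e. lies in `K(t)`. -/
def IsRatLS (f : LaurentSeries K) : Prop := ∃ r : RatFunc K, (r : LaurentSeries K) = f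

/-- `f` is a quadratic irrational: it is irrational and a root of a quadratic
polynomial with coefficients in `K[t]`. -/
def IsQuadIrr (f : LaurentSeries K) : Prop :=
  ¬ IsRatLS f ∧ ∃ a b c : Polynomial K, a ≠ 0 ∧
    Polynomial.aeval (tLS K) a * f ^ 2 + Polynomial.aeval (tLS K) b * f +
      Polynomial.aeval (tLS K) c = 0

/-- `(m, ℓ)` is a window for the periodic part of the continued fraction of `f`:
the partial quotients are periodic with period `ℓ ≥ 1` from index `m + 1` on. -/
def PeriodWindow (f : LaurentSeries K) (m ℓ : ℕ) : Prop :=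
  1 ≤ ℓ ∧ ∀ i : ℕ, m + 1 ≤ i → cfPQ f (i + ℓ) = cfPQ f i

/-- The `n`-escape of mass of the continued fraction expansion of `f`: the proportion,
within one period of the periodic part of the partial quotients of `f`, of the sum
`∑ max (deg A_i - n) 0` relative to `∑ deg A_i`. -/
def eMassOf (f : LaurentSeries K) (n : ℕ) : ℝ :=
  if h : ∃ s : ℕ × ℕ, PeriodWindow f s.1 s.2 then
    (∑ i ∈ Finset.Ico ((Classical.choose h).1 + 1)
        ((Classical.choose h).1 + 1 + (Classical.choose h).2),
        max ((degZ (cfPQ f i) : ℝ) - n) 0) /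
    (∑ i ∈ Finset.Ico ((Classical.choose h).1 + 1)
        ((Classical.choose h).1 + 1 + (Classical.choose h).2),
        (degZ (cfPQ f i) : ℝ))
  else 0

/-- The `n`-escape of mass in the `k`-th diagonal of `f` with respect to the
sequence `{g^k}`. -/
def eMassP (g f : LaurentSeries K) (k n : ℕ) : ℝ := eMassOf (g ^ k * f) n

/-- The `n`-escape of mass in the `k`-th diagonal of `f` with respect to `{t^k}`. -/
def eMass (f : LaurentSeries K) (k n : ℕ) : ℝ := eMassP (tLS K) f k n

/-- `f` exhibits `c` escape of mass with respect to the sequence `{g^k}`. -/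
def ExhibitsEscape (g f : LaurentSeries K) (c : ℝ) : Prop :=
  ∃ L : ℝ, Tendsto (fun n : ℕ => Filter.liminf (fun k : ℕ => eMassP g f k n) atTop)
    atTop (nhds L) ∧ c ≤ L

/-- `f` exhibits exactly `c` escape of mass with respect to the sequence `{g^k}`. -/
def ExhibitsExactEscape (g f : LaurentSeries K) (c : ℝ) : Prop :=
  Tendsto (fun n : ℕ => Filter.liminf (fun k : ℕ => eMassP g f k n) atTop)
    atTop (nhds c)

/-- `f` exhibits full (`c = 1`) maximal escape of mass with respect to `{g^k}`. -/
def ExhibitsFullMaxEscape (g f : LaurentSeries K) : Prop :=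
  Tendsto (fun n : ℕ => Filter.limsup (fun k : ℕ => eMassP g f k n) atTop)
    atTop (nhds 1)

/-- `A ⊆ ℕ` has natural density `c`. -/
def HasDensity (A : Set ℕ) (c : ℝ) : Prop :=
  Tendsto (fun M : ℕ => (((Finset.Icc 1 M).filter fun k => k ∈ A).card : ℝ) / M)
    atTop (nhds c)

/-- `f` exhibits full generic escape of mass with respect to `{t^k}`. -/
def FullGenericEscape (f : LaurentSeries K) : Prop :=
  ∀ ε : ℝ, 0 < ε → ∃ dens : ℕ → ℝ,
    (∀ n : ℕ, HasDensity {k : ℕ | 1 - ε < eMass f k n} (dens n)) ∧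
    Tendsto dens atTop (nhds 1)

/-- Substitution `t ↦ P(t)` on Laurent series: for `f = ∑_{i ≥ d} a_i t^{-i}` (with
`d = f.order` in the variable `X = t⁻¹`), `substLS f P = ∑_{i ≥ d} a_i P(t)^{-i}`. -/
def substLS (f : LaurentSeries K) (P : Polynomial K) : LaurentSeries K :=
  (Polynomial.aeval (tLS K) P)⁻¹ ^ f.order *
    HahnSeries.ofPowerSeries ℤ K
      (PowerSeries.mk fun n =>
        ∑ j ∈ Finset.range (n + 1),
          f.coeff (f.order + j) * (((Polynomial.aeval (tLS K) P)⁻¹ ^ j).coeff (n : ℤ)))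

/-- The `p`-Cantor sequence over `ZMod p`. -/
def cantor (p : ℕ) : ℕ → ZMod p
  | 0 => 1
  | (n + 1) =>
    if hp : 1 < p then
      if (n + 1) % p % 2 = 1 then 0
      else (((p - 1) / 2).choose (((n + 1) % p) / 2) : ZMod p) * cantor p ((n + 1) / p)
    else 0
  decreasing_by exact Nat.div_lt_self (Nat.succ_pos _) hp

/-- `Θ̃_p = ∑_{i ≥ 0} c_i^{(p)} t^{-i}`. -/
def cantorTilde (p : ℕ) : LaurentSeries (ZMod p) :=
  HahnSeries.ofPowerSeries ℤ (ZMod p) (PowerSeries.mk fun i => cantor p i)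

/-- `Θ_p = t⁻¹ ∑_{i ≥ 0} c_i^{(p)} t^{-i}`. -/
def cantorTheta (p : ℕ) : LaurentSeries (ZMod p) :=
  HahnSeries.single (1 : ℤ) 1 * cantorTilde p

/-- The Thue–Morse sequence over `ZMod 2`. -/
def thueMorse (n : ℕ) : ZMod 2 := ((Nat.digits 2 n).sum : ZMod 2)

/-- The Thue–Morse Laurent series `τ = ∑_{n ≥ 1} τ_n t^{-n}`. -/
def tmSeries : LaurentSeries (ZMod 2) :=
  HahnSeries.ofPowerSeries ℤ (ZMod 2) (PowerSeries.mk fun n => thueMorse n)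

/-- The extension of a one-sided sequence to `ℤ` by zero. -/
def extendSeq (S : ℕ → K) : ℤ → K := fun i => if 0 ≤ i then S i.toNat else 0

/-- The entry `W(S)[m, n]` of the number wall of the (doubly infinite) sequence `s`:
the determinant of the `(m+1) × (m+1)` Toeplitz matrix `(s_{n - i + j})`. -/
def wallEntry (s : ℤ → K) (m : ℕ) (n : ℤ) : K :=
  (Matrix.of fun i j : Fin (m + 1) => s (n - (i : ℕ) + (j : ℕ))).det

/-- The Laurent series `t⁻¹ ∑_{i ≥ 0} s_i t^{-i}` associated to a sequence. -/
def seriesOf (S : ℕ → K) : LaurentSeries K :=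
  HahnSeries.single (1 : ℤ) 1 * HahnSeries.ofPowerSeries ℤ K (PowerSeries.mk S)

/-- The coefficient sequence of `Θ = t⁻¹ ∑ s_i t^{-i}`, extended to `ℤ` by zero. -/
def coeffSeq (f : LaurentSeries K) : ℤ → K := fun i => if 0 ≤ i then f.coeff (i + 1) else 0

/-- The absolute value of a Laurent series in `F_q((t⁻¹))`: `|f| = q^{deg f}`. -/
def absLS {K : Type*} [Field K] [Fintype K] (f : LaurentSeries K) : ℝ :=
  if f = 0 then 0 else (Fintype.card K : ℝ) ^ (-f.order)



/-! ### Auxiliary lemmas for Statement 11 -/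

private lemma coeff_pow_p {p : ℕ} [Fact p.Prime] (f : PowerSeries (ZMod p)) (n : ℕ) :
    PowerSeries.coeff n (f ^ p) = if p ∣ n then PowerSeries.coeff (n / p) f else 0 := by
  have hp : 0 < p := (Fact.out : p.Prime).pos
  set T : Polynomial (ZMod p) := f.trunc (n + 1) with hT
  have hdvd : (PowerSeries.X : PowerSeries (ZMod p)) ^ (n + 1) ∣ f - (T : PowerSeries (ZMod p)) := by
    rw [PowerSeries.X_pow_dvd_iff]
    intro m hm
    simp [hT, Polynomial.coeff_coe, PowerSeries.coeff_trunc, hm]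
  have hdvd2 : (PowerSeries.X : PowerSeries (ZMod p)) ^ (n + 1) ∣
      f ^ p - (T : PowerSeries (ZMod p)) ^ p :=
    hdvd.trans (sub_dvd_pow_sub_pow _ _ p)
  have hco : PowerSeries.coeff n (f ^ p) =
      PowerSeries.coeff n ((T : PowerSeries (ZMod p)) ^ p) := by
    have h0 := (PowerSeries.X_pow_dvd_iff.mp hdvd2) n (lt_add_one n)
    rw [map_sub, sub_eq_zero] at h0
    exact h0
  have hTp : T ^ p = Polynomial.expand (ZMod p) p T := by
    rw [← Polynomial.map_frobenius_expand (p := p) T, ZMod.frobenius_zmod, Polynomial.map_id]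
  rw [hco, ← Polynomial.coe_pow, Polynomial.coeff_coe, hTp,
    Polynomial.coeff_expand hp]
  split_ifs with h
  · rw [hT, PowerSeries.coeff_trunc, if_pos (Nat.lt_succ_of_le (Nat.div_le_self n p))]
  · rfl

private lemma coeff_G (K : Type*) [CommRing K] (k i : ℕ) :
    (((1 : Polynomial K) + Polynomial.X ^ 2) ^ k).coeff i =
      if i % 2 = 0 then (k.choose (i / 2) : K) else 0 := by
  have h : ((1 : Polynomial K) + Polynomial.X ^ 2) ^ k =
      Polynomial.expand K 2 ((Polynomial.X + 1) ^ k) := by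
    rw [map_pow, map_add, Polynomial.expand_X, map_one, add_comm]
  rw [h, Polynomial.coeff_expand (by norm_num : 0 < 2)]
  by_cases h2 : i % 2 = 0
  · rw [if_pos (Nat.dvd_of_mod_eq_zero h2), if_pos h2, Polynomial.coeff_X_add_one_pow]
  · rw [if_neg (fun hd => h2 (Nat.eq_zero_of_dvd_of_lt hd (by omega) |> absurd <| by omega)),
      if_neg h2]

private lemma cantor_rec (p : ℕ) [Fact p.Prime] (n : ℕ) :
    cantor p n = (if n % p % 2 = 0 then (((p - 1) / 2).choose ((n % p) / 2) : ZMod p) else 0)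
      * cantor p (n / p) := by
  have hp1 : 1 < p := (Fact.out : p.Prime).one_lt
  cases n with
  | zero => simp [cantor, Nat.zero_mod, Nat.zero_div]
  | succ m =>
      rw [cantor]
      rw [dif_pos hp1]
      rcases Nat.mod_two_eq_zero_or_one ((m + 1) % p) with h | h
      · rw [if_neg (by omega), if_pos h]
      · rw [if_pos h, if_neg (by omega), zero_mul]

private lemma cantor_FE (p : ℕ) [Fact p.Prime] (hodd : Odd p) :
    PowerSeries.mk (cantor p) =
      ((((1 : Polynomial (ZMod p)) + Polynomial.X ^ 2) ^ ((p - 1) / 2) : Polynomial (ZMod p)) :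
          PowerSeries (ZMod p)) * (PowerSeries.mk (cantor p)) ^ p := by
  have hp1 : 1 < p := (Fact.out : p.Prime).one_lt
  have hple : ∀ m : ℕ, m % p ≤ m := fun m => Nat.mod_le m p
  ext n
  rw [PowerSeries.coeff_mk, PowerSeries.coeff_mul]
  rw [Finset.sum_eq_single (n % p, n - n % p)]
  · have hdm := Nat.div_add_mod n p
    have hsub : n - n % p = p * (n / p) := by omega
    have hdvd : p ∣ n - n % p := ⟨n / p, hsub⟩
    rw [Polynomial.coeff_coe, coeff_G, coeff_pow_p, if_pos hdvd, hsub,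
      Nat.mul_div_cancel_left _ (by omega : 0 < p), PowerSeries.coeff_mk,
      cantor_rec p n]
  · rintro ⟨i, j⟩ hmem hne
    rw [Finset.HasAntidiagonal.mem_antidiagonal] at hmem
    rw [Polynomial.coeff_coe, coeff_G, coeff_pow_p]
    by_cases hj : p ∣ j
    · by_cases hi2 : i % 2 = 0
      · by_cases hip : i < p
        · exfalso
          apply hne
          obtain ⟨c, hc⟩ := hj
          have hi : i = n % p := by
            have : n % p = i % p := by
              conv_lhs => rw [← hmem, hc]
              rw [Nat.add_mul_mod_self_left]
            rw [this, Nat.mod_eq_of_lt hip]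
          simp only [Prod.mk.injEq]
          exact ⟨hi, by omega⟩
        · have hcz : ((p - 1) / 2).choose (i / 2) = 0 := by
            apply Nat.choose_eq_zero_of_lt
            obtain ⟨pp, hpp⟩ := hodd
            omega
          rw [if_pos hi2, hcz, Nat.cast_zero, zero_mul]
      · rw [if_neg hi2, zero_mul]
    · rw [if_neg hj, mul_zero]
  · intro habs
    have := hple n
    exact absurd (Finset.HasAntidiagonal.mem_antidiagonal.mpr (by omega)) habs

private lemma cantor_sq (p : ℕ) [Fact p.Prime] (hodd : Odd p) :
    (1 + (PowerSeries.X : PowerSeries (ZMod p)) ^ 2) * (PowerSeries.mk (cantor p)) ^ 2 = 1 := by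
  have hp1 : 1 < p := (Fact.out : p.Prime).one_lt
  set u : PowerSeries (ZMod p) := 1 + PowerSeries.X ^ 2 with hu
  set F : PowerSeries (ZMod p) := PowerSeries.mk (cantor p) with hF
  set k : ℕ := (p - 1) / 2 with hk
  have hcoe : ((((1 : Polynomial (ZMod p)) + Polynomial.X ^ 2) ^ k : Polynomial (ZMod p)) :
      PowerSeries (ZMod p)) = u ^ k := by
    push_cast [Polynomial.coe_pow, Polynomial.coe_add, Polynomial.coe_one, Polynomial.coe_X]
    rfl
  have hFE : F = u ^ k * F ^ p := by
    conv_lhs => rw [hF, cantor_FE p hodd]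
    rw [hcoe]
  clear_value u F
  have h2k : 2 * k + 1 = p := by obtain ⟨m, hm⟩ := hodd; omega
  set H : PowerSeries (ZMod p) := u * F ^ 2 with hH
  have hHp : H ^ p = H := by
    calc H ^ p = u ^ p * F ^ (p * 2) := by rw [hH]; ring
      _ = u ^ (2 * k + 1) * F ^ (p * 2) := by rw [h2k]
      _ = u * (u ^ k * F ^ p) ^ 2 := by ring
      _ = u * F ^ 2 := by rw [← hFE]
  haveI : CharP (PowerSeries (ZMod p)) p :=
    charP_of_injective_ringHom PowerSeries.C_injective p
  set D : PowerSeries (ZMod p) := H - 1 with hD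
  have hDp : D ^ p = D := by
    rw [hD, sub_pow_char, hHp, one_pow]
  have hD0 : PowerSeries.coeff 0 D = 0 := by
    have hc : PowerSeries.constantCoeff F = 1 := by
      rw [hF, ← PowerSeries.coeff_zero_eq_constantCoeff, PowerSeries.coeff_mk]
      rw [cantor]
    simp [hD, hH, hu, PowerSeries.coeff_zero_eq_constantCoeff, map_mul, map_pow, map_add, hc]
  have hzero : ∀ n, PowerSeries.coeff n D = 0 := by
    intro n
    induction n using Nat.strong_induction_on with
    | _ n ih =>
      rcases Nat.eq_zero_or_pos n with h0 | h0
      · rw [h0]; exact hD0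
      · have hcn := coeff_pow_p D n
        rw [hDp] at hcn
        rw [hcn]
        split_ifs with hdvd
        · exact ih (n / p) (Nat.div_lt_self h0 hp1)
        · rfl
  have hDzero : D = 0 := by
    ext m
    rw [hzero m, map_zero]
  have hfin : H = 1 := by rwa [hD, sub_eq_zero] at hDzero
  exact hfin

private lemma single_sq (p : ℕ) :
    (HahnSeries.single (1 : ℤ) (1 : ZMod p)) ^ 2 = HahnSeries.single (2 : ℤ) (1 : ZMod p) := by
  rw [sq, HahnSeries.single_mul_single, one_mul]
  norm_num

private lemma cantorTilde_sq (p : ℕ) [Fact p.Prime] (hodd : Odd p) :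
    (1 + HahnSeries.single (2 : ℤ) (1 : ZMod p)) * (cantorTilde p) ^ 2 = 1 := by
  have h := congrArg (HahnSeries.ofPowerSeries ℤ (ZMod p)) (cantor_sq p hodd)
  rw [map_one, map_mul, map_add, map_one, map_pow, map_pow,
    HahnSeries.ofPowerSeries_X, single_sq] at h
  exact h

/-- `Θ_p` is a quadratic irrational: it is not rational, it satisfies
`(t Θ_p)^2 (1 + t^{-2}) = 1`, and it is a root of `(t² + 1) X² − 1` over `F_p[t]`. -/
theorem pCantor_is_quadratic (p : ℕ) [Fact p.Prime] (hodd : Odd p) :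
    ¬ IsRatLS (cantorTheta p) ∧
    (tLS (ZMod p) * cantorTheta p) ^ 2 * (1 + HahnSeries.single (2 : ℤ) (1 : ZMod p)) = 1 ∧
    Polynomial.aeval (tLS (ZMod p)) ((Polynomial.X : Polynomial (ZMod p)) ^ 2 + 1) *
        cantorTheta p ^ 2 - 1 = 0 := by
  have hp1 : 1 < p := (Fact.out : p.Prime).one_lt
  have htilde := cantorTilde_sq p hodd
  have hts : tLS (ZMod p) * cantorTheta p = cantorTilde p := by
    rw [tLS, cantorTheta, ← mul_assoc, HahnSeries.single_mul_single, one_mul]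
    norm_num [HahnSeries.single_zero_one]
  have hconj2 : (tLS (ZMod p) * cantorTheta p) ^ 2 *
      (1 + HahnSeries.single (2 : ℤ) (1 : ZMod p)) = 1 := by
    rw [hts, mul_comm]; exact htilde
  have htheta_sq : cantorTheta p ^ 2 =
      HahnSeries.single (2 : ℤ) (1 : ZMod p) * (cantorTilde p) ^ 2 := by
    rw [cantorTheta, mul_pow, single_sq]
  have hconj3 : Polynomial.aeval (tLS (ZMod p)) ((Polynomial.X : Polynomial (ZMod p)) ^ 2 + 1) *
      cantorTheta p ^ 2 - 1 = 0 := by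
    have haev : Polynomial.aeval (tLS (ZMod p)) ((Polynomial.X : Polynomial (ZMod p)) ^ 2 + 1) =
        HahnSeries.single (-2 : ℤ) (1 : ZMod p) + 1 := by
      rw [map_add, map_pow, Polynomial.aeval_X, map_one, tLS, sq,
        HahnSeries.single_mul_single, one_mul]
      norm_num
    rw [haev, htheta_sq, sub_eq_zero]
    calc (HahnSeries.single (-2 : ℤ) (1 : ZMod p) + 1) *
          (HahnSeries.single (2 : ℤ) (1 : ZMod p) * cantorTilde p ^ 2)
        = (HahnSeries.single (-2 : ℤ) (1 : ZMod p) * HahnSeries.single (2 : ℤ) (1 : ZMod p) +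
            HahnSeries.single (2 : ℤ) (1 : ZMod p)) * cantorTilde p ^ 2 := by ring
      _ = (1 + HahnSeries.single (2 : ℤ) (1 : ZMod p)) * cantorTilde p ^ 2 := by
          rw [HahnSeries.single_mul_single, one_mul]
          norm_num [HahnSeries.single_zero_one]
      _ = 1 := htilde
  refine ⟨?_, hconj2, hconj3⟩
  rintro ⟨r, hr⟩
  -- `r² (1 + X²) = X²` in `RatFunc (ZMod p)`.
  have hrat : r ^ 2 * (1 + RatFunc.X ^ 2) = RatFunc.X ^ 2 := by
    apply (show Function.Injective (fun x : RatFunc (ZMod p) => (x : LaurentSeries (ZMod p))) from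
      RingHom.injective _)
    beta_reduce
    rw [map_mul, map_pow, map_add, map_one,
      map_pow, RatFunc.coe_X, hr, htheta_sq]
    calc HahnSeries.single (2 : ℤ) (1 : ZMod p) * cantorTilde p ^ 2 *
          (1 + HahnSeries.single (1 : ℤ) (1 : ZMod p) ^ 2)
        = HahnSeries.single (2 : ℤ) (1 : ZMod p) *
            ((1 + HahnSeries.single (2 : ℤ) (1 : ZMod p)) * cantorTilde p ^ 2) := by
          rw [single_sq]; ring
      _ = HahnSeries.single (1 : ℤ) (1 : ZMod p) ^ 2 := by rw [htilde, mul_one, single_sq]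
  -- Clear denominators.
  have hden : r.denom ≠ 0 := r.denom_ne_zero
  have hdm : algebraMap (Polynomial (ZMod p)) (RatFunc (ZMod p)) r.num =
      r * algebraMap (Polynomial (ZMod p)) (RatFunc (ZMod p)) r.denom := by
    exact ((eq_div_iff (RatFunc.algebraMap_ne_zero hden)).mp
      (RatFunc.num_div_denom r).symm).symm
  have hpoly : r.num ^ 2 * (1 + Polynomial.X ^ 2) =
      Polynomial.X ^ 2 * r.denom ^ 2 := by
    apply RatFunc.algebraMap_injective (ZMod p)
    rw [map_mul, map_pow, map_add, map_one, map_pow, RatFunc.algebraMap_X,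
      map_mul, map_pow, map_pow, RatFunc.algebraMap_X, hdm]
    linear_combination (algebraMap (Polynomial (ZMod p)) (RatFunc (ZMod p)) r.denom) ^ 2 * hrat
  -- `1 + X²` is squarefree, coprime to `X²`, and not a unit.
  have h2 : (2 : ZMod p) ≠ 0 := by
    have h2n : ((2 : ℕ) : ZMod p) ≠ 0 := by
      rw [Ne, ZMod.natCast_eq_zero_iff]
      intro hdvd
      have := Nat.le_of_dvd (by norm_num) hdvd
      obtain ⟨m, hm⟩ := hodd
      omega
    simpa using h2n
  have hsep : ((1 : Polynomial (ZMod p)) + Polynomial.X ^ 2).Separable := by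
    have hder : Polynomial.derivative ((1 : Polynomial (ZMod p)) + Polynomial.X ^ 2) =
        Polynomial.C (2 : ZMod p) * Polynomial.X := by
      simp [Polynomial.derivative_X_pow, one_add_one_eq_two, Polynomial.C_ofNat]
    refine ⟨1, -(Polynomial.C ((2 : ZMod p)⁻¹) * Polynomial.X), ?_⟩
    rw [hder]
    have h21 : Polynomial.C ((2 : ZMod p)⁻¹) * Polynomial.C (2 : ZMod p) = 1 := by
      rw [← Polynomial.C_mul, inv_mul_cancel₀ h2, Polynomial.C_1]
    linear_combination (-(Polynomial.X : Polynomial (ZMod p)) ^ 2) * h21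
  have hsq : Squarefree ((1 : Polynomial (ZMod p)) + Polynomial.X ^ 2) := hsep.squarefree
  have hne0 : ((1 : Polynomial (ZMod p)) + Polynomial.X ^ 2) ≠ 0 := by
    intro h
    have := congrArg (fun q => Polynomial.coeff q 0) h
    simp at this
  have hcop : IsCoprime ((1 : Polynomial (ZMod p)) + Polynomial.X ^ 2)
      ((Polynomial.X : Polynomial (ZMod p)) ^ 2) := ⟨1, -1, by ring⟩
  have hdQ2 : ((1 : Polynomial (ZMod p)) + Polynomial.X ^ 2) ∣ r.denom ^ 2 :=
    hcop.dvd_of_dvd_mul_left ⟨r.num ^ 2, by linear_combination -hpoly⟩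
  have hdQ : ((1 : Polynomial (ZMod p)) + Polynomial.X ^ 2) ∣ r.denom :=
    (hsq.dvd_pow_iff_dvd two_ne_zero).mp hdQ2
  obtain ⟨d, hd⟩ := hdQ
  have hP2 : r.num ^ 2 = Polynomial.X ^ 2 * ((1 + Polynomial.X ^ 2) * d ^ 2) := by
    apply mul_left_cancel₀ hne0
    rw [hd] at hpoly
    linear_combination hpoly
  have hdP : ((1 : Polynomial (ZMod p)) + Polynomial.X ^ 2) ∣ r.num :=
    (hsq.dvd_pow_iff_dvd two_ne_zero).mp ⟨Polynomial.X ^ 2 * d ^ 2, by linear_combination hP2⟩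
  have hunit : IsUnit ((1 : Polynomial (ZMod p)) + Polynomial.X ^ 2) :=
    (RatFunc.isCoprime_num_denom r).isUnit_of_dvd' hdP ⟨d, hd⟩
  have hdeg : ((1 : Polynomial (ZMod p)) + Polynomial.X ^ 2).degree = 2 := by
    rw [add_comm, ← Polynomial.C_1, Polynomial.degree_X_pow_add_C (by norm_num : 0 < 2)]
    norm_cast
  rw [Polynomial.isUnit_iff_degree_eq_zero, hdeg] at hunit
  exact absurd hunit (by norm_num)


end EscapeOfMass
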